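/- Fix an integer x > 1. The balanced count R(x,y) satisfies R(x,y) = (2^{2-x}/(x-2)!) · binom(2x-2, x-1) · y^{x-2} + O(y^{x-3}) as y → ∞. -/

import Mathlib

open Finset

/-- `balancedCount x y` is the number of integer vectors of length `x` with
ℓ¹-norm `y`, whose positive entries sum to `⌈y/2⌉` and whose negative entries
sum to `-⌊y/2⌋`. -/
noncomputable def balancedCount (x y : ℕ) : ℕ :=
  Nat.card {m : Fin x → ℤ //
    (∑ i, |m i|) = (y : ℤ) ∧
    (∑ i ∈ Finset.univ.filter (fun i => 0 < m i), m i) = (((y + 1) / 2 : ℕ) : ℤ) ∧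
    (∑ i ∈ Finset.univ.filter (fun i => m i < 0), m i) = -(((y / 2 : ℕ)) : ℤ)}


lemma posSum {x : ℕ} (m : Fin x → ℤ) :
    ∑ i ∈ Finset.univ.filter (fun i => 0 < m i), m i = ∑ i, ((m i).toNat : ℤ) := by
  rw [Finset.sum_filter]
  exact Finset.sum_congr rfl fun i _ => by split_ifs with h <;> omega

lemma negSum {x : ℕ} (m : Fin x → ℤ) :
    ∑ i ∈ Finset.univ.filter (fun i => m i < 0), m i = -∑ i, (((-m i).toNat : ℤ)) := by
  rw [Finset.sum_filter, ← Finset.sum_neg_distrib]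
  exact Finset.sum_congr rfl fun i _ => by split_ifs with h <;> omega

/-- Step 1: balanced vectors correspond to pairs of nonneg vectors with disjoint support. -/
def pairEquiv (x p n : ℕ) :
    {m : Fin x → ℤ //
      (∑ i, |m i|) = ((p + n : ℕ) : ℤ) ∧
      (∑ i ∈ Finset.univ.filter (fun i => 0 < m i), m i) = (p : ℤ) ∧
      (∑ i ∈ Finset.univ.filter (fun i => m i < 0), m i) = -(n : ℤ)} ≃
    {ab : (Fin x → ℕ) × (Fin x → ℕ) //
      (∑ i, ab.1 i) = p ∧ (∑ i, ab.2 i) = n ∧ ∀ i, ab.1 i = 0 ∨ ab.2 i = 0} where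
  toFun m := ⟨(fun i => (m.1 i).toNat, fun i => (-m.1 i).toNat), by
    obtain ⟨m, h1, h2, h3⟩ := m
    rw [posSum] at h2
    rw [negSum] at h3
    have hp : ((∑ i, (m i).toNat : ℕ) : ℤ) = (p : ℤ) := by push_cast; rw [← h2]
    have hn : ((∑ i, (-m i).toNat : ℕ) : ℤ) = (n : ℤ) := by push_cast; omega
    exact ⟨Nat.cast_injective hp, Nat.cast_injective hn, fun i => by dsimp only; omega⟩⟩
  invFun ab := ⟨fun i => (ab.1.1 i : ℤ) - (ab.1.2 i : ℤ), by
    obtain ⟨⟨a, b⟩, ha, hb, hd⟩ := ab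
    dsimp only at ha hb hd ⊢
    have hta : ∀ i, ((a i : ℤ) - (b i : ℤ)).toNat = a i := fun i => by
      rcases hd i with h | h <;> omega
    have htb : ∀ i, (-((a i : ℤ) - (b i : ℤ))).toNat = b i := fun i => by
      rcases hd i with h | h <;> omega
    refine ⟨?_, ?_, ?_⟩
    · have habs : ∀ i, |(a i : ℤ) - (b i : ℤ)| = (a i : ℤ) + (b i : ℤ) := fun i => by
        rcases hd i with h | h
        · rw [h]; push_cast; rw [zero_sub, abs_neg, zero_add, abs_of_nonneg (Int.natCast_nonneg _)]
        · rw [h]; push_cast; rw [sub_zero, add_zero, abs_of_nonneg (Int.natCast_nonneg _)]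
      rw [Finset.sum_congr rfl fun i _ => habs i, Finset.sum_add_distrib]
      push_cast [← ha, ← hb]
      ring
    · rw [posSum]
      rw [Finset.sum_congr rfl fun (i : Fin x) _ => congrArg (Nat.cast : ℕ → ℤ) (hta i)]
      rw [← Nat.cast_sum, ha]
    · rw [negSum]
      rw [Finset.sum_congr rfl fun (i : Fin x) _ => congrArg (Nat.cast : ℕ → ℤ) (htb i)]
      rw [← Nat.cast_sum, hb]⟩
  left_inv m := by
    apply Subtype.ext
    funext i
    dsimp only
    omega
  right_inv ab := by
    obtain ⟨⟨a, b⟩, ha, hb, hd⟩ := ab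
    apply Subtype.ext
    dsimp only
    refine Prod.ext (funext fun i => ?_) (funext fun i => ?_) <;>
      (dsimp only; rcases hd i with h | h <;> (dsimp only at h; omega))

variable {x p n : ℕ}

/-- fiber equivalence: pairs with support of `b` equal to `S`. -/
def fiberEquiv (x p n : ℕ) (S : Finset (Fin x)) :
    {ab : {ab : (Fin x → ℕ) × (Fin x → ℕ) //
      (∑ i, ab.1 i) = p ∧ (∑ i, ab.2 i) = n ∧ ∀ i, ab.1 i = 0 ∨ ab.2 i = 0} //
        Finset.univ.filter (fun i => ab.1.2 i ≠ 0) = S} ≃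
    ({g : ↥S → ℕ // (∑ i, g i) + S.card = n} × {a : ↥(Sᶜ : Finset (Fin x)) → ℕ // ∑ i, a i = p}) where
  toFun ab := by
    obtain ⟨⟨⟨a, b⟩, ha, hb, hd⟩, hS⟩ := ab
    dsimp only at ha hb hd hS
    refine ⟨⟨fun i => b i - 1, ?_⟩, ⟨fun i => a i, ?_⟩⟩
    · have hbS : ∀ i : ↥S, 1 ≤ b i := by
        intro i
        have h2 : (i : Fin x) ∈ Finset.univ.filter (fun j => b j ≠ 0) := by rw [hS]; exact i.2
        have := (Finset.mem_filter.mp h2).2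
        omega
      have : ∑ i : ↥S, ((b i - 1) + 1) = ∑ i : ↥S, b (i : Fin x) :=
        Finset.sum_congr rfl fun i _ => by have := hbS i; omega
      rw [Finset.sum_add_distrib, Finset.sum_const, smul_eq_mul, mul_one] at this
      rw [Finset.card_univ, Fintype.card_coe] at this
      rw [this, Finset.sum_coe_sort S b]
      rw [← hb]
      apply Finset.sum_subset (Finset.subset_univ S)
      intro i _ hi
      rw [← hS, mem_filter] at hi
      simpa using hi
    · rw [Finset.sum_coe_sort _ a, ← ha]
      apply Finset.sum_subset (Finset.subset_univ _)
      intro i _ hi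
      rw [mem_compl, ← hS, mem_filter] at hi
      simp only [mem_univ, true_and, not_not] at hi
      rcases hd i with h | h
      · exact h
      · exact absurd h hi
  invFun ga := by
    obtain ⟨⟨g, hg⟩, ⟨a, ha⟩⟩ := ga
    refine ⟨⟨(fun i => if h : i ∈ (Sᶜ : Finset (Fin x)) then a ⟨i, h⟩ else 0,
      fun i => if h : i ∈ S then g ⟨i, h⟩ + 1 else 0), ?_, ?_, ?_⟩, ?_⟩
    · rw [← Finset.sum_subset (Finset.subset_univ (Sᶜ : Finset (Fin x)))
        (fun i _ hi => dif_neg hi)]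
      rw [← Finset.sum_attach (Sᶜ : Finset (Fin x)) _]
      rw [← ha]
      exact Finset.sum_congr rfl fun i _ => dif_pos i.2
    · rw [← Finset.sum_subset (Finset.subset_univ S) (fun i _ hi => dif_neg hi)]
      rw [← Finset.sum_attach S _]
      have hc : ∀ i ∈ S.attach, (if h : (i : Fin x) ∈ S then g ⟨i, h⟩ + 1 else 0) = g i + 1 :=
        fun i _ => by rw [dif_pos i.2, Subtype.coe_eta]
      rw [Finset.sum_congr rfl hc, Finset.sum_add_distrib, Finset.sum_const, smul_eq_mul, mul_one,
        Finset.card_attach, ← hg, Finset.univ_eq_attach]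
    · intro i
      by_cases h : i ∈ S
      · left; dsimp only; rw [dif_neg (by simp [Finset.mem_compl, h])]
      · right; dsimp only; rw [dif_neg h]
    · ext i
      dsimp only
      simp only [mem_filter, mem_univ, true_and]
      by_cases h : i ∈ S
      · simp [dif_pos h, h]
      · simp [dif_neg h, h]
  left_inv ab := by
    obtain ⟨⟨⟨a, b⟩, ha, hb, hd⟩, hS⟩ := ab
    dsimp only at ha hb hd hS
    apply Subtype.ext
    apply Subtype.ext
    dsimp only
    refine Prod.ext (funext fun i => ?_) (funext fun i => ?_)
    · dsimp only
      by_cases h : i ∈ (Sᶜ : Finset (Fin x))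
      · rw [dif_pos h]
      · rw [dif_neg h]
        rw [mem_compl, not_not, ← hS, mem_filter] at h
        rcases hd i with h' | h'
        · exact h'.symm
        · exact absurd h' h.2
    · dsimp only
      by_cases h : i ∈ S
      · rw [dif_pos h]
        have : b i ≠ 0 := by
          have := h; rw [← hS, mem_filter] at this; exact this.2
        omega
      · rw [dif_neg h]
        rw [← hS, mem_filter] at h
        simp only [mem_univ, true_and, not_not] at h
        exact h.symm
  right_inv ga := by
    obtain ⟨⟨g, hg⟩, ⟨a, ha⟩⟩ := ga
    refine Prod.ext (Subtype.ext (funext fun i => ?_)) (Subtype.ext (funext fun i => ?_))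
    · dsimp only
      rw [dif_pos i.2, Nat.add_sub_cancel, Subtype.coe_eta]
    · dsimp only
      rw [dif_pos i.2, Subtype.coe_eta]

lemma wcCard (ι : Type*) [Fintype ι] (m : ℕ) :
    Nat.card {f : ι → ℕ // ∑ i, f i = m} = (Fintype.card ι + m - 1).choose m := by
  classical
  rw [Nat.card_congr (Sym.equivNatSumOfFintype ι m).symm, Nat.card_eq_fintype_card,
    Sym.card_sym_eq_choose]

lemma scCard (ι : Type*) [Fintype ι] (m : ℕ) :
    Nat.card {g : ι → ℕ // (∑ i, g i) + Fintype.card ι = m} =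
      if Fintype.card ι ≤ m then (m - 1).choose (m - Fintype.card ι) else 0 := by
  classical
  split_ifs with h
  · rw [Nat.card_congr (Equiv.subtypeEquivRight (q := fun g : ι → ℕ => ∑ i, g i = m - Fintype.card ι)
      (fun g => by omega))]
    rw [wcCard]
    congr 1
    omega
  · have : IsEmpty {g : ι → ℕ // (∑ i, g i) + Fintype.card ι = m} := by
      constructor
      rintro ⟨g, hg⟩
      omega
    exact Nat.card_of_isEmpty

lemma natCard_sigma {ι : Type*} [Fintype ι] (f : ι → Type*) [∀ i, Finite (f i)] :
    Nat.card (Σ i, f i) = ∑ i, Nat.card (f i) := by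
  have : ∀ i, Fintype (f i) := fun i => Fintype.ofFinite _
  rw [Nat.card_eq_fintype_card, Fintype.card_sigma]
  exact Finset.sum_congr rfl fun i _ => (Nat.card_eq_fintype_card).symm








instance finite_sum_shift (ι : Type*) [Fintype ι] (c m : ℕ) :
    Finite {g : ι → ℕ // (∑ i, g i) + c = m} := by
  apply Finite.of_injective (fun g => (fun i => (⟨g.1 i, by
    have h1 : g.1 i ≤ ∑ j, g.1 j := Finset.single_le_sum (fun j _ => Nat.zero_le _) (mem_univ i)
    have := g.2
    omega⟩ : Fin (m + 1))))
  intro g₁ g₂ h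
  exact Subtype.ext (funext fun i => congrArg Fin.val (congrFun h i))

instance finite_sum_eq (ι : Type*) [Fintype ι] (m : ℕ) :
    Finite {g : ι → ℕ // ∑ i, g i = m} := by
  apply Finite.of_injective (fun g => (fun i => (⟨g.1 i, by
    have h1 : g.1 i ≤ ∑ j, g.1 j := Finset.single_le_sum (fun j _ => Nat.zero_le _) (mem_univ i)
    have := g.2
    omega⟩ : Fin (m + 1))))
  intro g₁ g₂ h
  exact Subtype.ext (funext fun i => congrArg Fin.val (congrFun h i))


lemma balancedCount_formula (x y : ℕ) :
    balancedCount x y = ∑ r ∈ range (x + 1), x.choose r *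
      ((if r ≤ y / 2 then (y / 2 - 1).choose (y / 2 - r) else 0) *
        ((x - r + (y + 1) / 2 - 1).choose ((y + 1) / 2))) := by
  classical
  set p := (y + 1) / 2 with hp
  set n := y / 2 with hn
  have hpn : ((p + n : ℕ) : ℤ) = (y : ℤ) := by push_cast; omega
  unfold balancedCount
  rw [Nat.card_congr (Equiv.subtypeEquivRight (q := fun m : Fin x → ℤ =>
      (∑ i, |m i|) = ((p + n : ℕ) : ℤ) ∧
      (∑ i ∈ Finset.univ.filter (fun i => 0 < m i), m i) = (p : ℤ) ∧
      (∑ i ∈ Finset.univ.filter (fun i => m i < 0), m i) = -(n : ℤ))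
    (fun m => by rw [hpn]))]
  rw [Nat.card_congr (pairEquiv x p n)]
  rw [Nat.card_congr (Equiv.sigmaFiberEquiv
    (fun ab : {ab : (Fin x → ℕ) × (Fin x → ℕ) //
      (∑ i, ab.1 i) = p ∧ (∑ i, ab.2 i) = n ∧ ∀ i, ab.1 i = 0 ∨ ab.2 i = 0} =>
        Finset.univ.filter (fun i => ab.1.2 i ≠ 0))).symm]
  rw [Nat.card_congr (Equiv.sigmaCongrRight (fun S => fiberEquiv x p n S))]
  rw [natCard_sigma]
  have hterm : ∀ S : Finset (Fin x),
      Nat.card ({g : ↥S → ℕ // (∑ i, g i) + S.card = n} ×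
        {a : ↥(Sᶜ : Finset (Fin x)) → ℕ // ∑ i, a i = p}) =
      (if S.card ≤ n then (n - 1).choose (n - S.card) else 0) *
        ((x - S.card + p - 1).choose p) := by
    intro S
    rw [Nat.card_prod]
    have h1 : Nat.card {g : ↥S → ℕ // (∑ i, g i) + S.card = n} =
        if S.card ≤ n then (n - 1).choose (n - S.card) else 0 := by
      have := scCard (↥S) n
      rwa [Fintype.card_coe] at this
    have h2 : Nat.card {a : ↥(Sᶜ : Finset (Fin x)) → ℕ // ∑ i, a i = p} =
        (x - S.card + p - 1).choose p := by
      have := wcCard (↥(Sᶜ : Finset (Fin x))) p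
      rwa [Fintype.card_coe, Finset.card_compl, Fintype.card_fin] at this
    rw [h1, h2]
  rw [Finset.sum_congr rfl (fun S _ => hterm S)]
  have := Finset.sum_powerset_apply_card (α := ℕ) (x := (univ : Finset (Fin x)))
    (fun r => (if r ≤ n then (n - 1).choose (n - r) else 0) * ((x - r + p - 1).choose p))
  rw [Finset.powerset_univ] at this
  rw [this]
  simp [Finset.card_univ, smul_eq_mul]

lemma abs_prod_sub_pow_le (f : ℕ → ℝ) (t M ε : ℝ) (hM : 0 ≤ M) (hε : 0 ≤ ε) (ht : |t| ≤ M) :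
    ∀ k : ℕ, (∀ i < k, |f i| ≤ M ∧ |f i - t| ≤ ε) →
      |∏ i ∈ range k, f i - t ^ k| ≤ k * ε * M ^ (k - 1)
  | 0, _ => by simp
  | (k+1), hf => by
    have ih := abs_prod_sub_pow_le f t M ε hM hε ht k (fun i hi => hf i (hi.trans (Nat.lt_succ_self k)))
    rw [Finset.prod_range_succ, pow_succ]
    have key : (∏ i ∈ range k, f i) * f k - t ^ k * t
        = ((∏ i ∈ range k, f i) - t ^ k) * f k + t ^ k * (f k - t) := by ring
    rw [key]
    have hfk := hf k (Nat.lt_succ_self k)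
    have h1 : |((∏ i ∈ range k, f i) - t ^ k) * f k| ≤ (k * ε * M ^ (k - 1)) * M := by
      rw [abs_mul]
      exact mul_le_mul ih hfk.1 (abs_nonneg _) (by positivity)
    have h2 : |t ^ k * (f k - t)| ≤ M ^ k * ε := by
      rw [abs_mul, abs_pow]
      exact mul_le_mul (pow_le_pow_left₀ (abs_nonneg _) ht k) hfk.2 (abs_nonneg _) (by positivity)
    calc |((∏ i ∈ range k, f i) - t ^ k) * f k + t ^ k * (f k - t)|
        ≤ |((∏ i ∈ range k, f i) - t ^ k) * f k| + |t ^ k * (f k - t)| := abs_add_le _ _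
      _ ≤ (k * ε * M ^ (k - 1)) * M + M ^ k * ε := add_le_add h1 h2
      _ ≤ k * ε * M ^ k + M ^ k * ε := by
          refine add_le_add ?_ le_rfl
          rcases Nat.eq_zero_or_pos k with hk | hk
          · subst hk; simp
          · have hMk : M ^ (k - 1) * M = M ^ k := by rw [← pow_succ, Nat.sub_add_cancel hk]
            calc (k : ℝ) * ε * M ^ (k - 1) * M = ↑k * ε * (M ^ (k - 1) * M) := by ring
              _ ≤ ↑k * ε * M ^ k := by rw [hMk]
      _ = (↑(k+1)) * ε * M ^ k := by push_cast; ring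
      _ = (↑(k+1)) * ε * M ^ ((k+1) - 1) := by norm_num

lemma vand (x : ℕ) (hx : 2 ≤ x) :
    ∑ r ∈ range (x + 1), (if 1 ≤ r ∧ r ≤ x - 1 then x.choose r * (x - 2).choose (r - 1) else 0)
      = (2 * x - 2).choose (x - 1) := by
  have h2x : 2 * x - 2 = x + (x - 2) := by omega
  rw [h2x, Nat.add_choose_eq, Finset.Nat.sum_antidiagonal_eq_sum_range_succ_mk]
  -- RHS sum over i in range (x - 1 + 1) = range x of x.choose i * (x-2).choose (x-1-i)
  have hx1 : x - 1 + 1 = x := by omega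
  rw [Nat.succ_eq_add_one, hx1]
  dsimp only
  rw [Finset.sum_range_succ]  -- split off r = x from LHS range (x+1)
  have hlast : (if 1 ≤ x ∧ x ≤ x - 1 then x.choose x * (x - 2).choose (x - 1) else 0) = 0 := by
    rw [if_neg]; omega
  rw [hlast, add_zero]
  apply Finset.sum_congr rfl
  intro r hr
  rw [mem_range] at hr
  rcases Nat.eq_zero_or_pos r with h0 | h0
  · subst h0
    rw [if_neg (by omega)]
    rw [Nat.choose_eq_zero_of_lt (show x - 2 < x - 1 - 0 by omega)]
    simp
  · rw [if_pos (by omega)]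
    congr 1
    have : x - 1 - r = (x - 2) - (r - 1) := by omega
    rw [this, Nat.choose_symm (by omega)]

set_option maxHeartbeats 1000000 in
lemma perR (x y r : ℕ) (hx : 2 ≤ x) (hr1 : 1 ≤ r) (hrx : r ≤ x - 1) (hy : 4 * x + 4 ≤ y) :
    |(((y / 2 - 1).choose (r - 1) * ((x - r + (y + 1) / 2 - 1).choose ((y + 1) / 2)) : ℕ) : ℝ)
      - ((x - 2).choose (r - 1) : ℝ) / (Nat.factorial (x - 2)) * ((y : ℝ) / 2) ^ (x - 2)|
    ≤ ((x : ℝ) - 2) * ((x : ℝ) + 1) * (y : ℝ) ^ (x - 3) := by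
  set n := y / 2 with hn
  set p := (y + 1) / 2 with hp
  set a := r - 1 with ha
  set b := x - r - 1 with hb
  have hab : a + b = x - 2 := by omega
  have h2n : 2 * n ≤ y := by omega
  have h2n' : y ≤ 2 * n + 1 := by omega
  have h2p : y ≤ 2 * p := by omega
  have h2p' : 2 * p ≤ y + 1 := by omega
  have h2nR : 2 * (n : ℝ) ≤ y := by exact_mod_cast h2n
  have h2nR' : (y : ℝ) ≤ 2 * n + 1 := by exact_mod_cast h2n'
  have h2pR : (y : ℝ) ≤ 2 * p := by exact_mod_cast h2p
  have h2pR' : 2 * (p : ℝ) ≤ y + 1 := by exact_mod_cast h2p'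
  have hyR : 4 * (x : ℝ) + 4 ≤ y := by exact_mod_cast hy
  have hxR : (2 : ℝ) ≤ x := by exact_mod_cast hx
  have haR : (a : ℝ) + 3 ≤ x + 1 := by
    have : a + 3 ≤ x + 1 := by omega
    exact_mod_cast this
  have hbR : (b : ℝ) + 2 ≤ x := by
    have : b + 2 ≤ x := by omega
    exact_mod_cast this
  set f : ℕ → ℝ := fun j => if j < a then (n : ℝ) - 1 - j else (p : ℝ) + b - ((j : ℝ) - a) with hf
  -- A: first binomial
  have hA : ((n - 1).choose a : ℝ) * (Nat.factorial a) = ∏ j ∈ range a, f j := by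
    have h1 : ((Nat.factorial a * (n - 1).choose a : ℕ) : ℝ)
        = ∏ i ∈ range a, ((n - 1 - i : ℕ) : ℝ) := by
      rw [← Nat.descFactorial_eq_factorial_mul_choose, Nat.descFactorial_eq_prod_range]
      push_cast
      rfl
    push_cast at h1
    rw [mul_comm, h1]
    apply Finset.prod_congr rfl
    intro i hi
    have hia : i < a := mem_range.mp hi
    have hin : i + 2 ≤ n := by omega
    simp only [hf, if_pos hia]
    rw [Nat.cast_sub (by omega), Nat.cast_sub (by omega)]
    push_cast
    ring
  -- B: second binomial
  have hB : (((x - r + p - 1).choose p : ℕ) : ℝ) * (Nat.factorial b)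
      = ∏ i ∈ range b, ((p : ℝ) + b - i) := by
    have h0 : x - r + p - 1 = p + b := by omega
    rw [h0, Nat.choose_symm_add]
    have h1 : ((Nat.factorial b * (p + b).choose b : ℕ) : ℝ)
        = ∏ i ∈ range b, ((p + b - i : ℕ) : ℝ) := by
      rw [← Nat.descFactorial_eq_factorial_mul_choose, Nat.descFactorial_eq_prod_range]
      push_cast
      rfl
    push_cast at h1
    rw [mul_comm, h1]
    apply Finset.prod_congr rfl
    intro i hi
    have hib : i < b := mem_range.mp hi
    rw [Nat.cast_sub (by omega)]
    push_cast
    ring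
  -- combined product
  have hsplit : ∏ j ∈ range (x - 2), f j
      = (∏ j ∈ range a, f j) * ∏ i ∈ range b, ((p : ℝ) + b - i) := by
    rw [← hab, Finset.prod_range_add]
    congr 1
    apply Finset.prod_congr rfl
    intro i hi
    simp only [hf, if_neg (by omega : ¬(a + i < a))]
    push_cast
    ring
  -- bounds on factors
  have hbound : ∀ j < x - 2, |f j| ≤ (y : ℝ) ∧ |f j - (y : ℝ) / 2| ≤ (x : ℝ) + 1 := by
    intro j hj
    by_cases hja : j < a
    · have hjR : (j : ℝ) + 1 ≤ a := by exact_mod_cast hja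
      simp only [hf, if_pos hja]
      rw [abs_le, abs_le]
      constructor <;> constructor <;> linarith
    · have hjaR : (a : ℝ) ≤ j := by
        have : a ≤ j := by omega
        exact_mod_cast this
      have hjR : (j : ℝ) + 1 ≤ a + b := by
        have : j + 1 ≤ a + b := by omega
        exact_mod_cast this
      simp only [hf, if_neg hja]
      rw [abs_le, abs_le]
      constructor <;> constructor <;> linarith
  -- apply the product bound
  have hP := abs_prod_sub_pow_le f ((y : ℝ) / 2) (y : ℝ) ((x : ℝ) + 1)
    (by positivity) (by linarith) (by rw [abs_of_nonneg (by positivity)]; linarith)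
    (x - 2) hbound
  have hx2R : ((x - 2 : ℕ) : ℝ) = (x : ℝ) - 2 := by
    rw [Nat.cast_sub hx]; norm_num
  have hx3 : (x - 2) - 1 = x - 3 := by omega
  rw [hx2R, hx3] at hP
  -- factorial identity
  have hfact : ((x - 2).choose a * Nat.factorial a * Nat.factorial b : ℕ) = Nat.factorial (x - 2) := by
    have : (x - 2) - a = b := by omega
    rw [← this]
    exact Nat.choose_mul_factorial_mul_factorial (by omega)
  have hfactR : ((x - 2).choose a : ℝ) * (Nat.factorial a) * (Nat.factorial b)
      = (Nat.factorial (x - 2) : ℝ) := by exact_mod_cast hfact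
  have hfa : (0 : ℝ) < (Nat.factorial a : ℝ) := by exact_mod_cast (Nat.factorial_pos a)
  have hfb : (0 : ℝ) < (Nat.factorial b : ℝ) := by exact_mod_cast (Nat.factorial_pos b)
  have hfx : (0 : ℝ) < (Nat.factorial (x - 2) : ℝ) := by exact_mod_cast (Nat.factorial_pos (x - 2))
  -- rewrite the target difference
  have hprod : (((n - 1).choose a : ℝ)) * (((x - r + p - 1).choose p : ℕ) : ℝ)
      = (∏ j ∈ range (x - 2), f j) / ((Nat.factorial a : ℝ) * (Nat.factorial b : ℝ)) := by
    rw [hsplit, ← hA, ← hB]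
    field_simp
  have hcf : ((x - 2).choose a : ℝ) / (Nat.factorial (x - 2) : ℝ)
      = 1 / ((Nat.factorial a : ℝ) * (Nat.factorial b : ℝ)) := by
    rw [div_eq_div_iff hfx.ne' (by positivity : ((Nat.factorial a : ℝ) * (Nat.factorial b : ℝ)) ≠ 0)]
    rw [← hfactR]
    ring
  have hmain : (((n - 1).choose a * ((x - r + p - 1).choose p) : ℕ) : ℝ)
      - ((x - 2).choose a : ℝ) / (Nat.factorial (x - 2)) * ((y : ℝ) / 2) ^ (x - 2)
      = ((∏ j ∈ range (x - 2), f j) - ((y : ℝ) / 2) ^ (x - 2))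
        / ((Nat.factorial a : ℝ) * (Nat.factorial b : ℝ)) := by
    push_cast
    rw [hprod, hcf]
    field_simp
  rw [hmain, abs_div, abs_of_pos (by positivity : (0:ℝ) < (Nat.factorial a : ℝ) * (Nat.factorial b : ℝ))]
  have h1le : (1 : ℝ) ≤ (Nat.factorial a : ℝ) * (Nat.factorial b : ℝ) := by
    have := Nat.one_le_iff_ne_zero.mpr (Nat.factorial_ne_zero a)
    have := Nat.one_le_iff_ne_zero.mpr (Nat.factorial_ne_zero b)
    have h1 : (1 : ℝ) ≤ (Nat.factorial a : ℝ) := by exact_mod_cast Nat.one_le_iff_ne_zero.mpr (Nat.factorial_ne_zero a)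
    have h2 : (1 : ℝ) ≤ (Nat.factorial b : ℝ) := by exact_mod_cast Nat.one_le_iff_ne_zero.mpr (Nat.factorial_ne_zero b)
    nlinarith
  calc |(∏ j ∈ range (x - 2), f j) - ((y : ℝ) / 2) ^ (x - 2)|
        / ((Nat.factorial a : ℝ) * (Nat.factorial b : ℝ))
      ≤ |(∏ j ∈ range (x - 2), f j) - ((y : ℝ) / 2) ^ (x - 2)| := by
        apply div_le_self (abs_nonneg _) h1le
    _ ≤ ((x : ℝ) - 2) * ((x : ℝ) + 1) * (y : ℝ) ^ (x - 3) := hP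






lemma choose_le_two_pow (k l : ℕ) : k.choose l ≤ 2 ^ k := by
  rcases le_or_gt l k with h | h
  · calc k.choose l ≤ ∑ i ∈ range (k + 1), k.choose i :=
        Finset.single_le_sum (fun i _ => Nat.zero_le _) (mem_range.mpr (by omega))
      _ = 2 ^ k := Nat.sum_range_choose k
  · rw [Nat.choose_eq_zero_of_lt h]; exact Nat.zero_le _

set_option maxHeartbeats 1000000 in
theorem balancedCount_asymptotics (x : ℕ) (hx : 1 < x) :
    ∃ C : ℝ, 0 ≤ C ∧ ∀ y : ℕ, 1 ≤ y →
      |(balancedCount x y : ℝ) -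
        (2 : ℝ) ^ ((2 : ℤ) - (x : ℤ)) / (Nat.factorial (x - 2)) *
          ((2 * x - 2).choose (x - 1)) * (y : ℝ) ^ (x - 2)|
        ≤ C * (y : ℝ) ^ (x - 3) := by
  have hx2 : 2 ≤ x := hx
  have hxR : (2 : ℝ) ≤ (x : ℝ) := by exact_mod_cast hx2
  set c : ℝ := (2 : ℝ) ^ ((2 : ℤ) - (x : ℤ)) / (Nat.factorial (x - 2)) *
    ((2 * x - 2).choose (x - 1)) with hc
  have hc0 : 0 ≤ c := by positivity
  set B0 : ℝ := (2 : ℝ) ^ (10 * x + 6) + c * ((4 * x + 3 : ℕ) : ℝ) ^ (x - 2) with hB0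
  have hB00 : 0 ≤ B0 := by positivity
  set Cbig : ℝ := (2 : ℝ) ^ x * (((x : ℝ) - 2) * ((x : ℝ) + 1)) with hCbig
  have hCbig0 : 0 ≤ Cbig := by
    apply mul_nonneg (by positivity)
    apply mul_nonneg (by linarith) (by linarith)
  refine ⟨Cbig + B0, by linarith, ?_⟩
  intro y hy
  have hy0R : (1 : ℝ) ≤ (y : ℝ) := by exact_mod_cast hy
  have hyp3 : (1 : ℝ) ≤ (y : ℝ) ^ (x - 3) := one_le_pow₀ hy0R
  have hyp3' : (0 : ℝ) ≤ (y : ℝ) ^ (x - 3) := by positivity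
  -- key zpow identity
  have hzpow : ((y : ℝ) / 2) ^ (x - 2) = (2 : ℝ) ^ ((2 : ℤ) - (x : ℤ)) * (y : ℝ) ^ (x - 2) := by
    rw [div_pow]
    have h1 : ((2 : ℤ) - (x : ℤ)) = -((x - 2 : ℕ) : ℤ) := by
      have : ((x - 2 : ℕ) : ℤ) = (x : ℤ) - 2 := by omega
      rw [this]; ring
    rw [h1, zpow_neg, zpow_natCast]
    field_simp
  rcases le_or_gt (4 * x + 4) y with hbig | hsmall
  · -- main case
    have hNR : (balancedCount x y : ℝ) = ∑ r ∈ range (x + 1),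
        ((x.choose r * ((if r ≤ y / 2 then (y / 2 - 1).choose (y / 2 - r) else 0) *
          ((x - r + (y + 1) / 2 - 1).choose ((y + 1) / 2))) : ℕ) : ℝ) := by
      rw [balancedCount_formula]
      exact Nat.cast_sum _ _
    set T : ℝ := ((y : ℝ) / 2) ^ (x - 2) with hT
    set h : ℕ → ℝ := fun r =>
      ((if 1 ≤ r ∧ r ≤ x - 1 then x.choose r * (x - 2).choose (r - 1) else 0 : ℕ) : ℝ)
        / (Nat.factorial (x - 2)) * T with hh
    have hsum_h : ∑ r ∈ range (x + 1), h r = c * (y : ℝ) ^ (x - 2) := by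
      simp only [hh]
      rw [← Finset.sum_mul, ← Finset.sum_div, ← Nat.cast_sum, vand x hx2, hzpow, hc]
      ring
    set E : ℝ := ((x : ℝ) - 2) * ((x : ℝ) + 1) * (y : ℝ) ^ (x - 3) with hE
    have hE0 : 0 ≤ E := by
      apply mul_nonneg (mul_nonneg (by linarith) (by linarith)) (by positivity)
    have hper : ∀ r ∈ range (x + 1),
        |((x.choose r * ((if r ≤ y / 2 then (y / 2 - 1).choose (y / 2 - r) else 0) *
          ((x - r + (y + 1) / 2 - 1).choose ((y + 1) / 2))) : ℕ) : ℝ) - h r|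
        ≤ (x.choose r : ℝ) * E := by
      intro r hr
      rw [mem_range] at hr
      by_cases hcase : 1 ≤ r ∧ r ≤ x - 1
      · have hrn : r ≤ y / 2 := by omega
        have hsymm : (y / 2 - 1).choose (y / 2 - r) = (y / 2 - 1).choose (r - 1) := by
          have h1 : y / 2 - r = (y / 2 - 1) - (r - 1) := by omega
          rw [h1, Nat.choose_symm (by omega)]
        have hg : ((x.choose r * ((if r ≤ y / 2 then (y / 2 - 1).choose (y / 2 - r) else 0) *
            ((x - r + (y + 1) / 2 - 1).choose ((y + 1) / 2))) : ℕ) : ℝ)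
            = (x.choose r : ℝ) * (((y / 2 - 1).choose (r - 1) *
              ((x - r + (y + 1) / 2 - 1).choose ((y + 1) / 2)) : ℕ) : ℝ) := by
          rw [if_pos hrn, hsymm]; push_cast; ring
        have hhr : h r = (x.choose r : ℝ) *
            (((x - 2).choose (r - 1) : ℝ) / (Nat.factorial (x - 2)) * T) := by
          simp only [hh]
          rw [if_pos hcase]; push_cast; ring
        rw [hg, hhr, ← mul_sub, abs_mul, abs_of_nonneg (by positivity : (0:ℝ) ≤ (x.choose r : ℝ))]
        apply mul_le_mul_of_nonneg_left _ (by positivity : (0:ℝ) ≤ (x.choose r : ℝ))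
        exact perR x y r hx2 hcase.1 hcase.2 hbig
      · have hr0x : r = 0 ∨ r = x := by omega
        have hg0 : ((x.choose r * ((if r ≤ y / 2 then (y / 2 - 1).choose (y / 2 - r) else 0) *
            ((x - r + (y + 1) / 2 - 1).choose ((y + 1) / 2))) : ℕ) : ℝ) = 0 := by
          rcases hr0x with h0 | h0
          · subst h0
            have h00 : (y / 2 - 1).choose (y / 2 - 0) = 0 :=
              Nat.choose_eq_zero_of_lt (by omega)
            rw [h00]
            push_cast
            simp
          · rw [h0]
            have hxx : x - x + (y + 1) / 2 - 1 = (y + 1) / 2 - 1 := by omega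
            have h00 : (x - x + (y + 1) / 2 - 1).choose ((y + 1) / 2) = 0 := by
              rw [hxx]
              exact Nat.choose_eq_zero_of_lt (by omega)
            rw [h00]
            push_cast
            ring
        have hh0 : h r = 0 := by
          simp only [hh]
          rw [if_neg hcase]
          push_cast
          ring
        rw [hg0, hh0]
        simp only [sub_zero, abs_zero]
        positivity
    -- assemble
    rw [hNR, ← hsum_h, ← Finset.sum_sub_distrib]
    calc |∑ r ∈ range (x + 1),
          (((x.choose r * ((if r ≤ y / 2 then (y / 2 - 1).choose (y / 2 - r) else 0) *
            ((x - r + (y + 1) / 2 - 1).choose ((y + 1) / 2))) : ℕ) : ℝ) - h r)|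
        ≤ ∑ r ∈ range (x + 1),
          |((x.choose r * ((if r ≤ y / 2 then (y / 2 - 1).choose (y / 2 - r) else 0) *
            ((x - r + (y + 1) / 2 - 1).choose ((y + 1) / 2))) : ℕ) : ℝ) - h r| :=
          Finset.abs_sum_le_sum_abs _ _
      _ ≤ ∑ r ∈ range (x + 1), (x.choose r : ℝ) * E := Finset.sum_le_sum hper
      _ = (2 : ℝ) ^ x * E := by
          rw [← Finset.sum_mul, ← Nat.cast_sum, Nat.sum_range_choose]
          push_cast
          ring
      _ = Cbig * (y : ℝ) ^ (x - 3) := by rw [hCbig, hE]; ring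
      _ ≤ (Cbig + B0) * (y : ℝ) ^ (x - 3) := by
          apply mul_le_mul_of_nonneg_right (by linarith) hyp3'
  · -- small case
    have hyle : y ≤ 4 * x + 3 := by omega
    have hNb : balancedCount x y ≤ 2 ^ (10 * x + 6) := by
      rw [balancedCount_formula]
      calc ∑ r ∈ range (x + 1), x.choose r *
            ((if r ≤ y / 2 then (y / 2 - 1).choose (y / 2 - r) else 0) *
              ((x - r + (y + 1) / 2 - 1).choose ((y + 1) / 2)))
          ≤ ∑ r ∈ range (x + 1), x.choose r * (2 ^ (4 * x + 3) * 2 ^ (5 * x + 3)) := by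
            apply Finset.sum_le_sum
            intro r hr
            apply Nat.mul_le_mul_left
            apply Nat.mul_le_mul
            · split_ifs with hif
              · calc (y / 2 - 1).choose (y / 2 - r) ≤ 2 ^ (y / 2 - 1) := choose_le_two_pow _ _
                  _ ≤ 2 ^ (4 * x + 3) := Nat.pow_le_pow_right (by norm_num) (by omega)
              · exact Nat.zero_le _
            · calc (x - r + (y + 1) / 2 - 1).choose ((y + 1) / 2)
                  ≤ 2 ^ (x - r + (y + 1) / 2 - 1) := choose_le_two_pow _ _
                _ ≤ 2 ^ (5 * x + 3) := Nat.pow_le_pow_right (by norm_num) (by omega)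
        _ = 2 ^ x * (2 ^ (4 * x + 3) * 2 ^ (5 * x + 3)) := by
            rw [← Finset.sum_mul, Nat.sum_range_choose]
        _ = 2 ^ (10 * x + 6) := by
            rw [← pow_add, ← pow_add]
            congr 1
            ring
    have hNbR : (balancedCount x y : ℝ) ≤ (2 : ℝ) ^ (10 * x + 6) := by
      have := hNb
      calc (balancedCount x y : ℝ) ≤ ((2 ^ (10 * x + 6) : ℕ) : ℝ) := by exact_mod_cast this
        _ = (2 : ℝ) ^ (10 * x + 6) := by push_cast; ring
    have hcy : c * (y : ℝ) ^ (x - 2) ≤ c * ((4 * x + 3 : ℕ) : ℝ) ^ (x - 2) := by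
      apply mul_le_mul_of_nonneg_left _ hc0
      apply pow_le_pow_left₀ (by positivity)
      exact_mod_cast hyle
    calc |(balancedCount x y : ℝ) - c * (y : ℝ) ^ (x - 2)|
        ≤ |(balancedCount x y : ℝ)| + |c * (y : ℝ) ^ (x - 2)| := abs_sub _ _
      _ = (balancedCount x y : ℝ) + c * (y : ℝ) ^ (x - 2) := by
          rw [abs_of_nonneg (by positivity), abs_of_nonneg (by positivity)]
      _ ≤ (2 : ℝ) ^ (10 * x + 6) + c * ((4 * x + 3 : ℕ) : ℝ) ^ (x - 2) := by
          apply add_le_add hNbR hcy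
      _ = B0 := by rw [hB0]
      _ ≤ B0 * (y : ℝ) ^ (x - 3) := le_mul_of_one_le_right hB00 hyp3
      _ ≤ (Cbig + B0) * (y : ℝ) ^ (x - 3) := by
          apply mul_le_mul_of_nonneg_right (by linarith) hyp3'
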